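/- Fix an algebraic closure Ω of the rational number field ℚ and let b ∈ Ω be an element with b² = 2. Then every involution σ in the absolute Galois group Gal(ℚ) = Aut(Ω|ℚ) satisfies σ(b) = b. Consequently, every involution of Gal(ℚ) fixes the subfield ℚ(√2) pointwise, and the set of involutions of Gal(ℚ) coincides with the set of involutions of the subgroup Aut(Ω|ℚ(√2)). -/
import Mathlib

theorem invol_fixes_b
    (Ω : Type*) [Field Ω] [Algebra ℚ Ω] [IsAlgClosed Ω] [CharZero Ω]
    (b : Ω) (hb : b ^ 2 = 2) (σ : Ω ≃ₐ[ℚ] Ω) (hσ : σ * σ = 1) : σ b = b := by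
  have hσσ : ∀ x : Ω, σ (σ x) = x := fun x => by
    simpa using congrArg (fun τ : Ω ≃ₐ[ℚ] Ω => τ x) hσ
  have hb0 : b ≠ 0 := by
    intro h
    rw [h] at hb
    norm_num at hb
  have hbne : ¬ b = -b := by
    intro h
    have h2 : (2 : Ω) * b = 0 := by linear_combination h
    rcases mul_eq_zero.mp h2 with h' | h'
    · exact two_ne_zero h'
    · exact hb0 h'
  have hσ2 : σ (2 : Ω) = 2 := map_ofNat σ 2
  have hσb2 : (σ b) ^ 2 = b ^ 2 := by
    rw [← map_pow, hb, hσ2]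
  have hcases : σ b = b ∨ σ b = -b := by
    have h0 : (σ b - b) * (σ b + b) = 0 := by linear_combination hσb2
    rcases mul_eq_zero.mp h0 with h' | h'
    · exact Or.inl (by linear_combination h')
    · exact Or.inr (by linear_combination h')
  rcases hcases with h | hneg
  · exact h
  exfalso
  obtain ⟨a, ha⟩ := IsAlgClosed.exists_pow_nat_eq b (n := 2) (by norm_num)
  set t := a * σ a with ht_def
  have hσt : σ t = t := by rw [ht_def, map_mul, hσσ a, mul_comm]
  have ht2 : t ^ 2 = -2 := by
    have h1 : t ^ 2 = b * σ b := by rw [ht_def, ← ha, map_pow]; ring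
    rw [h1, hneg]
    linear_combination -hb
  set i := t / b with hi_def
  have hi2 : i ^ 2 = -1 := by
    rw [hi_def, div_pow]
    rw [div_eq_iff (pow_ne_zero 2 hb0)]
    linear_combination ht2 + hb
  have hσi : σ i = -i := by
    rw [hi_def, map_div₀, hσt, hneg, div_neg]
  obtain ⟨w, hw⟩ := IsAlgClosed.exists_pow_nat_eq (1 + i) (n := 2) (by norm_num)
  set s := w * σ w with hs_def
  have hσs : σ s = s := by rw [hs_def, map_mul, hσσ w, mul_comm]
  have hs2 : s ^ 2 = 2 := by
    have h1 : s ^ 2 = (1 + i) * σ (1 + i) := by rw [hs_def, ← hw, map_pow]; ring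
    rw [h1, map_add, map_one, hσi]
    linear_combination -hi2
  have h0 : (s - b) * (s + b) = 0 := by linear_combination hs2 - hb
  rcases mul_eq_zero.mp h0 with h' | h'
  · have hsb : s = b := by linear_combination h'
    rw [hsb] at hσs
    exact hbne (by linear_combination hneg - hσs)
  · have hsb : s = -b := by linear_combination h'
    rw [hsb, map_neg, hneg] at hσs
    exact hbne (by linear_combination hσs)

/-- Every involution `σ` in `Gal(ℚ) = Ω ≃ₐ[ℚ] Ω` fixes a square root
`b` of `2`; consequently every involution fixes `ℚ(√2)` pointwise, and the set of
involutions of `Gal(ℚ)` coincides with the set of involutions of the subgroup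
`Aut(Ω|ℚ(√2))` fixing `ℚ(√2)`. -/
theorem involutions_fix_sqrt_two
    (Ω : Type*) [Field Ω] [Algebra ℚ Ω] [IsAlgClosure ℚ Ω]
    (b : Ω) (hb : b ^ 2 = 2) :
    (∀ σ : Ω ≃ₐ[ℚ] Ω, σ * σ = 1 → σ ≠ 1 → σ b = b) ∧
    (∀ σ : Ω ≃ₐ[ℚ] Ω, σ * σ = 1 → σ ≠ 1 →
      ∀ x ∈ IntermediateField.adjoin ℚ {b}, σ x = x) ∧
    ({σ : Ω ≃ₐ[ℚ] Ω | σ * σ = 1 ∧ σ ≠ 1} =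
      {σ : Ω ≃ₐ[ℚ] Ω |
        σ ∈ (IntermediateField.adjoin ℚ {b}).fixingSubgroup ∧ σ * σ = 1 ∧ σ ≠ 1}) := by
  haveI : IsAlgClosed Ω := IsAlgClosure.isAlgClosed ℚ
  haveI : CharZero Ω := charZero_of_injective_algebraMap (algebraMap ℚ Ω).injective
  have key : ∀ σ : Ω ≃ₐ[ℚ] Ω, σ * σ = 1 → σ b = b := fun σ hσ =>
    invol_fixes_b Ω b hb σ hσ
  have fix : ∀ σ : Ω ≃ₐ[ℚ] Ω, σ * σ = 1 →
      ∀ x ∈ IntermediateField.adjoin ℚ {b}, σ x = x := by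
    intro σ hσ x hx
    induction hx using IntermediateField.adjoin_induction with
    | mem y hy => rw [Set.mem_singleton_iff.mp hy]; exact key σ hσ
    | algebraMap y => exact σ.commutes y
    | add y z hy hz ihy ihz => rw [map_add, ihy, ihz]
    | inv y hy ihy => rw [map_inv₀, ihy]
    | mul y z hy hz ihy ihz => rw [map_mul, ihy, ihz]
  refine ⟨fun σ hσ _ => key σ hσ, fun σ hσ _ => fix σ hσ, ?_⟩
  ext σ
  simp only [Set.mem_setOf_eq]
  constructor
  · rintro ⟨h1, h2⟩
    exact ⟨(IntermediateField.mem_fixingSubgroup_iff _ σ).mpr (fix σ h1), h1, h2⟩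
  · rintro ⟨_, h1, h2⟩
    exact ⟨h1, h2⟩
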